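/- The inverse of the N×N matrix R with entries R_{l,m} = min(t_l, t_m), where 0 < t_1 < t_2 < ... < t_N, is a symmetric tridiagonal matrix with diagonal entries (R^{-1})_{11} = t_2/(t_1(t_2-t_1)), (R^{-1})_{jj} = (t_{j+1}-t_{j-1})/((t_j-t_{j-1})(t_{j+1}-t_j)) for 1 < j < N, (R^{-1})_{NN} = 1/(t_N-t_{N-1}), and off-diagonal entries (R^{-1})_{j,j+1} = (R^{-1})_{j+1,j} = -1/(t_{j+1}-t_j). -/

import Mathlib

open Matrix

lemma sum_ite_eq_two' {N : ℕ} (f : Fin N → ℝ) (a b : Fin N) (A B : ℝ)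
    (h : ∀ k, f k = (if k = a then A else 0) + (if k = b then B else 0)) :
    ∑ k, f k = A + B := by
  simp only [h, Finset.sum_add_distrib, Finset.sum_ite_eq', Finset.mem_univ, if_true]

lemma sum_ite_eq_three' {N : ℕ} (f : Fin N → ℝ) (a b c : Fin N) (A B C : ℝ)
    (h : ∀ k, f k = (if k = a then A else 0) + (if k = b then B else 0) + (if k = c then C else 0)) :
    ∑ k, f k = A + B + C := by
  simp only [h, Finset.sum_add_distrib, Finset.sum_ite_eq', Finset.mem_univ, if_true]

/-- The inverse of the matrix `R` with entries `R l m = min (t l) (t m)`,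
for `0 < t 0 < t 1 < ... < t (N-1)`, is the symmetric tridiagonal matrix described. -/
theorem min_matrix_inv (N : ℕ) (hN : 2 ≤ N) (t : Fin N → ℝ)
    (hpos : ∀ i, 0 < t i) (hmono : StrictMono t) :
    (Matrix.of fun l m : Fin N => min (t l) (t m))⁻¹ =
      Matrix.of (fun l m : Fin N =>
        -- `τ k` is `t k` (with junk value past the end), `p j` is `t (j-1)` with `t₋₁ = 0`
        let τ : ℕ → ℝ := fun k => if hk : k < N then t ⟨k, hk⟩ else 0
        let p : Fin N → ℝ := fun j => if (j : ℕ) = 0 then 0 else τ ((j : ℕ) - 1)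
        if l = m then
          (if (l : ℕ) + 1 = N then 1 / (τ l - p l)
           else (τ ((l : ℕ) + 1) - p l) / ((τ l - p l) * (τ ((l : ℕ) + 1) - τ l)))
        else if (m : ℕ) = (l : ℕ) + 1 then -(1 / (τ m - τ l))
        else if (l : ℕ) = (m : ℕ) + 1 then -(1 / (τ l - τ m))
        else 0) := by
  have hle : ∀ a b : Fin N, (a:ℕ) ≤ (b:ℕ) → min (t a) (t b) = t a :=
    fun a b h => min_eq_left (hmono.le_iff_le.mpr (Fin.le_def.mpr h))
  have hge : ∀ a b : Fin N, (b:ℕ) ≤ (a:ℕ) → min (t a) (t b) = t b :=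
    fun a b h => min_eq_right (hmono.le_iff_le.mpr (Fin.le_def.mpr h))
  have hlt : ∀ a b : Fin N, (a:ℕ) < (b:ℕ) → t a < t b :=
    fun a b h => hmono (Fin.lt_def.mpr h)
  apply Matrix.inv_eq_right_inv
  ext l m
  rw [Matrix.mul_apply]
  simp only [Matrix.of_apply, Matrix.one_apply]
  rcases Nat.lt_or_ge ((m:ℕ)+1) N with hmN | hmN'
  · by_cases hm0 : (m:ℕ) = 0
    · -- m = 0, m+1 < N : support {m, m+1}
      rw [sum_ite_eq_two' _ m ⟨(m:ℕ)+1, hmN⟩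
        (min (t l) (t m) * (t ⟨(m:ℕ)+1, hmN⟩ / (t m * (t ⟨(m:ℕ)+1, hmN⟩ - t m))))
        (min (t l) (t ⟨(m:ℕ)+1, hmN⟩) * (-(1 / (t ⟨(m:ℕ)+1, hmN⟩ - t m))))]
      · have h1 : t m < t ⟨(m:ℕ)+1, hmN⟩ := hlt m _ (by simp)
        have h0 : (t m : ℝ) ≠ 0 := ne_of_gt (hpos m)
        have h1' : t ⟨(m:ℕ)+1, hmN⟩ - t m ≠ 0 := ne_of_gt (sub_pos.mpr h1)
        rcases eq_or_ne l m with rfl | hlm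
        · rw [if_pos rfl, hge l l le_rfl, hle l ⟨(l:ℕ)+1, hmN⟩ (by simp)]
          field_simp
          ring
        · rw [if_neg hlm]
          have hlm' : (m:ℕ) < (l:ℕ) := by
            rcases Nat.lt_or_ge (m:ℕ) (l:ℕ) with h | h
            · exact h
            · exact absurd (Fin.ext (by omega : (l:ℕ) = (m:ℕ))) hlm
          rw [hge l m (by omega), hge l ⟨(m:ℕ)+1, hmN⟩ (by simp; omega)]
          field_simp
          ring
      · intro k
        by_cases hkm : k = m
        · subst hkm
          have h2 : ¬ k = ⟨(k:ℕ)+1, hmN⟩ := by simp [Fin.ext_iff]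
          have h3 : ¬ ((k:ℕ) + 1 = N) := by omega
          simp only [if_pos rfl, if_neg h2, h3, if_false, if_pos hm0,
            dif_pos k.isLt, dif_pos hmN, Fin.eta, sub_zero, add_zero, if_true, eq_self_iff_true]
        · have hkm' : (k:ℕ) ≠ (m:ℕ) := fun h => hkm (Fin.ext h)
          by_cases hkc : k = ⟨(m:ℕ)+1, hmN⟩
          · have hkv : (k:ℕ) = (m:ℕ)+1 := by rw [hkc]
            simp only [if_neg hkm, if_neg (show ¬(m:ℕ) = (k:ℕ)+1 by omega), if_pos hkv,
              if_pos hkc, dif_pos k.isLt, dif_pos m.isLt, Fin.eta, zero_add]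
            rw [hkc]
          · have h2 : ¬ (m:ℕ) = (k:ℕ) + 1 := by omega
            have h3 : ¬ ((k:ℕ)) = (m:ℕ) + 1 := fun h => hkc (Fin.ext (by simp [h]))
            simp only [if_neg hkm, if_neg h2, if_neg h3, if_neg hkc, mul_zero, add_zero]
    · -- m ≥ 1, m+1 < N : support {m-1, m, m+1}
      have hm1 : (m:ℕ) - 1 < N := by omega
      rw [sum_ite_eq_three' _ ⟨(m:ℕ)-1, hm1⟩ m ⟨(m:ℕ)+1, hmN⟩
        (min (t l) (t ⟨(m:ℕ)-1, hm1⟩) * (-(1 / (t m - t ⟨(m:ℕ)-1, hm1⟩))))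
        (min (t l) (t m) * ((t ⟨(m:ℕ)+1, hmN⟩ - t ⟨(m:ℕ)-1, hm1⟩) /
          ((t m - t ⟨(m:ℕ)-1, hm1⟩) * (t ⟨(m:ℕ)+1, hmN⟩ - t m))))
        (min (t l) (t ⟨(m:ℕ)+1, hmN⟩) * (-(1 / (t ⟨(m:ℕ)+1, hmN⟩ - t m))))]
      · have h1 : t ⟨(m:ℕ)-1, hm1⟩ < t m := hlt _ m (by simp; omega)
        have h2 : t m < t ⟨(m:ℕ)+1, hmN⟩ := hlt m _ (by simp)
        have h1' : t m - t ⟨(m:ℕ)-1, hm1⟩ ≠ 0 := ne_of_gt (sub_pos.mpr h1)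
        have h2' : t ⟨(m:ℕ)+1, hmN⟩ - t m ≠ 0 := ne_of_gt (sub_pos.mpr h2)
        rcases lt_trichotomy (l:ℕ) (m:ℕ) with hl | hl | hl
        · rw [if_neg (fun h => by rw [h] at hl; omega),
            hle l ⟨(m:ℕ)-1, hm1⟩ (by simp; omega), hle l m (by omega),
            hle l ⟨(m:ℕ)+1, hmN⟩ (by simp; omega)]
          field_simp
          ring
        · rw [if_pos (Fin.ext hl), hge l ⟨(m:ℕ)-1, hm1⟩ (by simp; omega), hge l m (by omega),
            hle l ⟨(m:ℕ)+1, hmN⟩ (by simp; omega),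
            show t l = t m from congrArg t (Fin.ext hl)]
          field_simp
          ring
        · rw [if_neg (fun h => by rw [h] at hl; omega),
            hge l ⟨(m:ℕ)-1, hm1⟩ (by simp; omega), hge l m (by omega),
            hge l ⟨(m:ℕ)+1, hmN⟩ (by simp; omega)]
          field_simp
          ring
      · intro k
        by_cases hkm : k = m
        · subst hkm
          have h2 : ¬ k = ⟨(k:ℕ)-1, hm1⟩ := by simp [Fin.ext_iff]; omega
          have h3 : ¬ k = ⟨(k:ℕ)+1, hmN⟩ := by simp [Fin.ext_iff]
          have h4 : ¬ ((k:ℕ) + 1 = N) := by omega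
          simp only [if_pos rfl, if_neg h4, if_neg hm0, if_neg h2, if_neg h3, if_false,
            eq_self_iff_true, if_true, dif_pos k.isLt, dif_pos hmN, dif_pos hm1, Fin.eta,
            add_zero, zero_add]
        · have hkm' : (k:ℕ) ≠ (m:ℕ) := fun h => hkm (Fin.ext h)
          by_cases hka : k = ⟨(m:ℕ)-1, hm1⟩
          · have hkv : (k:ℕ) = (m:ℕ)-1 := by rw [hka]
            have h2 : (m:ℕ) = (k:ℕ) + 1 := by omega
            simp only [if_neg hkm, if_pos h2, if_pos hka,
              if_neg (show ¬ k = ⟨(m:ℕ)+1, hmN⟩ from fun h => by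
                rw [h] at hkv; simp at hkv; omega),
              dif_pos k.isLt, dif_pos m.isLt, Fin.eta, zero_add, add_zero]
            rw [hka]
          · by_cases hkc : k = ⟨(m:ℕ)+1, hmN⟩
            · have hkv : (k:ℕ) = (m:ℕ)+1 := by rw [hkc]
              simp only [if_neg hkm, if_neg (show ¬(m:ℕ) = (k:ℕ)+1 by omega), if_pos hkv,
                if_neg hka, if_pos hkc, dif_pos k.isLt, dif_pos m.isLt, Fin.eta, zero_add, add_zero]
              rw [hkc]
            · have h2 : ¬ (m:ℕ) = (k:ℕ) + 1 := fun h => hka (Fin.ext (by simp; omega))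
              have h3 : ¬ ((k:ℕ)) = (m:ℕ) + 1 := fun h => hkc (Fin.ext (by simp [h]))
              simp only [if_neg hkm, if_neg h2, if_neg h3, if_neg hka, if_neg hkc,
                mul_zero, add_zero]
  · -- m+1 = N : support {m-1, m}
    have hmN : (m:ℕ) + 1 = N := by omega
    have hm0 : (m:ℕ) ≠ 0 := by omega
    have hm1 : (m:ℕ) - 1 < N := by omega
    rw [sum_ite_eq_two' _ ⟨(m:ℕ)-1, hm1⟩ m
      (min (t l) (t ⟨(m:ℕ)-1, hm1⟩) * (-(1 / (t m - t ⟨(m:ℕ)-1, hm1⟩))))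
      (min (t l) (t m) * (1 / (t m - t ⟨(m:ℕ)-1, hm1⟩)))]
    · have h1 : t ⟨(m:ℕ)-1, hm1⟩ < t m := hlt _ m (by simp; omega)
      have h1' : t m - t ⟨(m:ℕ)-1, hm1⟩ ≠ 0 := ne_of_gt (sub_pos.mpr h1)
      rcases lt_trichotomy (l:ℕ) (m:ℕ) with hl | hl | hl
      · rw [if_neg (fun h => by rw [h] at hl; omega),
          hle l ⟨(m:ℕ)-1, hm1⟩ (by simp; omega), hle l m (by omega)]
        field_simp
        ring
      · rw [if_pos (Fin.ext hl), hge l ⟨(m:ℕ)-1, hm1⟩ (by simp; omega), hge l m (by omega)]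
        field_simp
        ring
      · exact absurd l.isLt (by omega)
    · intro k
      by_cases hkm : k = m
      · subst hkm
        have h2 : ¬ k = ⟨(k:ℕ)-1, hm1⟩ := by simp [Fin.ext_iff]; omega
        simp only [if_pos rfl, if_pos hmN, if_neg h2, if_neg hm0, if_false,
          eq_self_iff_true, if_true, dif_pos k.isLt, dif_pos hm1, Fin.eta, zero_add]
      · by_cases hka : k = ⟨(m:ℕ)-1, hm1⟩
        · have hkv : (k:ℕ) = (m:ℕ)-1 := by rw [hka]
          have h2 : (m:ℕ) = (k:ℕ) + 1 := by omega
          simp only [if_neg hkm, if_pos h2, if_pos hka,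
            dif_pos k.isLt, dif_pos m.isLt, Fin.eta, add_zero]
          rw [hka]
        · have hkm' : (k:ℕ) ≠ (m:ℕ) := fun h => hkm (Fin.ext h)
          have h2 : ¬ (m:ℕ) = (k:ℕ) + 1 := fun h => hka (Fin.ext (by simp; omega))
          have h3 : ¬ ((k:ℕ)) = (m:ℕ) + 1 := by omega
          simp only [if_neg hkm, if_neg h2, if_neg h3, if_neg hka, mul_zero, add_zero]
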